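/- arXiv:1804.06513 — 2 statements merged into one kernel-verified Lean document; each statement's English description precedes it below -/
import Mathlib

section
/- Let J be a 2-torsion free Jordan ring containing a nontrivial idempotent e, with Peirce decomposition J = J₁ ⊕ J_{1/2} ⊕ J₀, and suppose: (i) for a_i ∈ J_i (i = 1, 0), if t a_i = 0 for all t ∈ J_{1/2} then a_i = 0; (ii) for a₀ ∈ J₀, if t a₀ = 0 for all t ∈ J₀ then a₀ = 0; (iii) for a ∈ J_{1/2}, if t a = 0 for all t ∈ J₀ then a = 0. Let J' be a Jordan ring and φ : J → J' a bijective n-multiplicative isomorphism (n ≥ 2). Then for all a₁ ∈ J₁, a_{1/2} ∈ J_{1/2}, a₀ ∈ J₀: φ(a₁ + a_{1/2} + a₀) = φ(a₁) + φ(a_{1/2}) + φ(a₀). -/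
/-- Peirce 1-component relative to `e`: elements `x` with `e*x = x`. -/
def peirce1 {J : Type*} [Mul J] (e : J) : Set J := {x | e * x = x}

/-- Peirce 1/2-component relative to `e`: elements `x` with `e*x = (1/2)x`, i.e. `e*x + e*x = x`. -/
def peirceHalf {J : Type*} [Mul J] [Add J] (e : J) : Set J := {x | e * x + e * x = x}

/-- Peirce 0-component relative to `e`: elements `x` with `e*x = 0`. -/
def peirce0 {J : Type*} [Mul J] [Zero J] (e : J) : Set J := {x | e * x = 0}

/-- The right-normed nonassociative monomial `x₁(x₂(⋯(x_{n-1}x_n)⋯))` on a list of arguments. -/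
def rnm {J : Type*} [Mul J] [Zero J] : List J → J
  | [] => 0
  | [x] => x
  | x :: y :: l => x * rnm (y :: l)

/-- `φ` is an `n`-multiplicative map (w.r.t. the right-normed monomial of degree `n`). -/
def IsNMulMap {J J' : Type*} [Mul J] [Zero J] [Mul J'] [Zero J'] (n : ℕ) (φ : J → J') : Prop :=
  ∀ l : List J, l.length = n → φ (rnm l) = rnm (l.map φ)

set_option linter.unusedSectionVars false

section Lists

variable {R : Type*}

section MulZero
variable [Mul R] [Zero R]

lemma rnm_single (x : R) : rnm [x] = x := rfl

lemma rnm_cons' (x : R) (l : List R) (h : l ≠ []) : rnm (x :: l) = x * rnm l := by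
  cases l with
  | nil => exact absurd rfl h
  | cons y t => rfl

lemma rnm_nest (l₁ l₂ : List R) (h : l₂ ≠ []) :
    rnm (l₁ ++ l₂) = rnm (l₁ ++ [rnm l₂]) := by
  induction l₁ with
  | nil => simp [rnm_single]
  | cons a t ih =>
      rw [List.cons_append, List.cons_append,
        rnm_cons' a _ (by simp [h]),
        rnm_cons' a _ (by simp),
        ih]

def lit (e : R) : ℕ → R → R
  | 0, x => x
  | m+1, x => e * lit e m x

lemma lit_succ (e : R) (m : ℕ) (x : R) : lit e (m+1) x = e * lit e m x := rfl

lemma lit_inner (e : R) (m : ℕ) (x : R) : lit e (m+1) x = lit e m (e * x) := by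
  induction m with
  | zero => rfl
  | succ m ih => rw [lit_succ, ih]; rfl

lemma rnm_replicate (e : R) (m : ℕ) (x : R) :
    rnm (List.replicate m e ++ [x]) = lit e m x := by
  induction m with
  | zero => simp [rnm_single, lit]
  | succ m ih =>
      rw [List.replicate_succ, List.cons_append, rnm_cons' _ _ (by simp), ih, lit_succ]

lemma rep_ne_nil (m : ℕ) (hm : 1 ≤ m) (x : R) : List.replicate m x ≠ [] := by
  intro h
  have := congrArg List.length h
  simp at this
  omega

end MulZero

section Ring
variable [NonUnitalNonAssocCommRing R]

lemma rnm_last_add (l : List R) (h : l ≠ []) (x y : R) :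
    rnm (l ++ [x + y]) = rnm (l ++ [x]) + rnm (l ++ [y]) := by
  induction l with
  | nil => exact absurd rfl h
  | cons a t ih =>
      rcases eq_or_ne t [] with rfl | ht
      · show rnm [a, x+y] = rnm [a, x] + rnm [a, y]
        show a * (x+y) = a * x + a * y
        exact mul_add a x y
      · rw [List.cons_append, rnm_cons' _ _ (by simp), ih ht,
          List.cons_append, List.cons_append,
          rnm_cons' _ _ (by simp), rnm_cons' _ _ (by simp), mul_add]

lemma rnm_last_zero (l : List R) (h : l ≠ []) : rnm (l ++ [(0:R)]) = 0 := by
  induction l with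
  | nil => exact absurd rfl h
  | cons a t ih =>
      rcases eq_or_ne t [] with rfl | ht
      · show a * 0 = 0
        exact mul_zero a
      · rw [List.cons_append, rnm_cons' _ _ (by simp), ih ht, mul_zero]

lemma rnm_rep_zero_head (m : ℕ) (hm : 1 ≤ m) (w : R) :
    rnm (List.replicate m (0:R) ++ [w]) = 0 := by
  obtain ⟨m', rfl⟩ : ∃ m', m = m' + 1 := ⟨m - 1, by omega⟩
  rw [List.replicate_succ, List.cons_append, rnm_cons' _ _ (by simp), zero_mul]

lemma lit_add (e : R) (m : ℕ) (x y : R) : lit e m (x + y) = lit e m x + lit e m y := by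
  induction m with
  | zero => rfl
  | succ m ih => rw [lit_succ, lit_succ, lit_succ, ih, mul_add]

lemma lit_zero (e : R) (m : ℕ) : lit e m (0:R) = 0 := by
  induction m with
  | zero => rfl
  | succ m ih => rw [lit_succ, ih, mul_zero]

lemma evalE1 (e z x : R) (m : ℕ) :
    rnm ((z :: List.replicate m e) ++ [x]) = z * lit e m x := by
  rw [List.cons_append, rnm_cons' _ _ (by simp), rnm_replicate]

lemma evalE2 (e z t x : R) (m : ℕ) :
    rnm ((z :: (List.replicate m e ++ [t])) ++ [x]) = z * lit e m (t * x) := by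
  rw [List.cons_append, rnm_cons' _ _ (by simp), List.append_assoc]
  rw [show [t] ++ [x] = [t, x] from rfl]
  rw [rnm_nest _ [t,x] (by simp), show rnm [t,x] = t * x from rfl, rnm_replicate]

lemma evalE3 (e z t x : R) (m : ℕ) :
    rnm ((z :: (List.replicate m e ++ [t, e])) ++ [x]) = z * lit e m (t * (e * x)) := by
  rw [List.cons_append, rnm_cons' _ _ (by simp), List.append_assoc]
  rw [show [t, e] ++ [x] = [t, e, x] from rfl]
  rw [rnm_nest _ [t,e,x] (by simp), show rnm [t,e,x] = t * (e * x) from rfl, rnm_replicate]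

end Ring
end Lists

section Core
variable {J : Type*} [NonUnitalNonAssocCommRing J]

lemma cancel2 (h2 : ∀ x : J, x + x = 0 → x = 0) (x y : J) (h : x + x = y + y) : x = y := by
  have h9 : (x - y) + (x - y) = (x + x) - (y + y) := by abel
  rw [h, sub_self] at h9
  exact sub_eq_zero.mp (h2 _ h9)

variable (hJordan : ∀ x y : J, ((x*x)*y)*x = (x*x)*(y*x))
variable (h2 : ∀ x : J, x + x = 0 → x = 0)
variable (e : J) (hid : e * e = e)
include hJordan h2 hid

lemma identA (x z y : J) :
    x*x*y*z + (x*z*y*x + z*x*y*x) = x*x*(y*z) + (x*z*(y*x) + z*x*(y*x)) := by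
  have hA := hJordan (x+z) y
  have hB := hJordan (x-z) y
  have hz := hJordan z y
  have key : (x*x*y*z + (x*z*y*x + z*x*y*x) - (x*x*(y*z) + (x*z*(y*x) + z*x*(y*x))))
      + (x*x*y*z + (x*z*y*x + z*x*y*x) - (x*x*(y*z) + (x*z*(y*x) + z*x*(y*x))))
      = ((x+z)*(x+z)*y*(x+z) - (x+z)*(x+z)*(y*(x+z)))
        - ((x-z)*(x-z)*y*(x-z) - (x-z)*(x-z)*(y*(x-z)))
        - ((z*z*y*z - z*z*(y*z)) + (z*z*y*z - z*z*(y*z))) := by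
    simp only [add_mul, mul_add, sub_mul, mul_sub]
    abel
  rw [hA, hB, hz] at key
  simp only [sub_self, add_zero, sub_zero, zero_sub, neg_zero, zero_add] at key
  exact sub_eq_zero.mp (h2 _ key)

lemma identII (y z : J) :
    (e*y)*z + (e*((e*z)*y) + e*((e*z)*y)) = e*(y*z) + ((e*z)*(y*e) + (e*z)*(y*e)) := by
  have h := identA hJordan h2 e hid e z y
  rw [hid] at h
  rw [mul_comm z e] at h
  rw [mul_comm ((e*z)*y) e] at h
  exact h

lemma cubicL (z : J) :
    e*z + (e*(e*(e*z)) + e*(e*(e*z))) = e*(e*z) + (e*(e*z) + e*(e*z)) := by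
  have h := identII hJordan h2 e hid e z
  rw [hid] at h
  rw [mul_comm (e*z) e] at h
  exact h

lemma commL1 (a : J) (ha : e * a = a) (y : J) : e * (a * y) = a * (e * y) := by
  have h := identII hJordan h2 e hid y a
  rw [ha] at h
  rw [mul_comm y e] at h
  rw [mul_comm (e*y) a] at h
  rw [mul_comm y a] at h
  have h9 : e*(a*y) - a*(e*y)
      = (a*(e*y) + (e*(a*y) + e*(a*y))) - (e*(a*y) + (a*(e*y) + a*(e*y))) := by abel
  rw [h, sub_self] at h9
  exact sub_eq_zero.mp h9

lemma commL0 (z : J) (hz : e * z = 0) (y : J) : (e * y) * z = e * (y * z) := by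
  have h := identII hJordan h2 e hid y z
  rw [hz] at h
  simp only [zero_mul, mul_zero, add_zero] at h
  exact h

lemma J1mulJ0 (a zz : J) (ha : e * a = a) (hz : e * zz = 0) : a * zz = 0 :=
  calc a * zz = (e*a) * zz := by rw [ha]
    _ = e * (a * zz) := commL0 hJordan h2 e hid zz hz a
    _ = a * (e * zz) := commL1 hJordan h2 e hid a ha zz
    _ = 0 := by rw [hz, mul_zero]

lemma J0mulJ1 (a zz : J) (ha : e * a = a) (hz : e * zz = 0) : zz * a = 0 := by
  rw [mul_comm]; exact J1mulJ0 hJordan h2 e hid a zz ha hz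

lemma halfE (b : J) (hb : e*b + e*b = b) : e*(e*b) + e*(e*b) = e*b := by
  rw [← mul_add, hb]

lemma halfAdd (t s : J) (ht : e*t + e*t = t) (hs : e*s + e*s = s) :
    e*(t+s) + e*(t+s) = t + s := by
  have h1 : e*(t+s) + e*(t+s) = (e*t + e*t) + (e*s + e*s) := by rw [mul_add]; abel
  rw [h1, ht, hs]

lemma halfMul1 (a t : J) (ha : e*a = a) (ht : e*t + e*t = t) :
    e*(a*t) + e*(a*t) = a*t := by
  rw [commL1 hJordan h2 e hid a ha t, ← mul_add, ht]

lemma halfMul0 (z t : J) (hz : e*z = 0) (ht : e*t + e*t = t) :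
    e*(z*t) + e*(z*t) = z*t := by
  rw [mul_comm z t, ← commL0 hJordan h2 e hid z hz t, ← add_mul, ht]

lemma sqHalf (a : J) (ha : e*a + e*a = a) : e*(e*(a*a)) = e*(a*a) := by
  have h := identA hJordan h2 e hid a e e
  rw [hid] at h
  rw [mul_comm a e] at h
  rw [mul_comm (a*a) e] at h
  rw [mul_comm (e*(a*a)) e] at h
  rw [mul_comm (e*a) e] at h
  have t1 : (e*(e*a))*a + (e*(e*a))*a = (e*a)*a := by rw [← add_mul, ← mul_add, ha]
  have t2 : (e*a)*(e*a) + (e*a)*(e*a) = (e*a)*a := by rw [← mul_add, ha]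
  rw [t1, t2] at h
  exact add_right_cancel h

lemma sqHalfMixed (t s : J) (ht : e*t + e*t = t) (hs : e*s + e*s = s) :
    e*(e*(t*s)) = e*(t*s) := by
  have hts := halfAdd hJordan h2 e hid t s ht hs
  have h := sqHalf hJordan h2 e hid (t+s) hts
  have hexp : (t+s)*(t+s) = (t*t + s*s) + (t*s + t*s) := by
    rw [mul_add, add_mul, add_mul, mul_comm s t]; abel
  rw [hexp] at h
  have h9 : (e*(e*(t*s)) + e*(e*(t*s))) - (e*(t*s) + e*(t*s))
      = (e*(e*((t*t + s*s) + (t*s + t*s))) - e*((t*t + s*s) + (t*s + t*s)))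
        + ((e*(t*t) - e*(e*(t*t))) + (e*(s*s) - e*(e*(s*s)))) := by
    simp only [mul_add]; abel
  rw [h, sub_self, sqHalf hJordan h2 e hid t ht, sqHalf hJordan h2 e hid s hs,
    sub_self, sub_self] at h9
  simp only [add_zero, zero_add] at h9
  exact cancel2 h2 _ _ (sub_eq_zero.mp h9)

end Core

section Core2
variable {J : Type*} [NonUnitalNonAssocCommRing J]
variable (hJordan : ∀ x y : J, ((x*x)*y)*x = (x*x)*(y*x))
variable (h2 : ∀ x : J, x + x = 0 → x = 0)
variable (e : J) (hid : e * e = e)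

lemma lit_one (a : J) (ha : e * a = a) (m : ℕ) : lit e m a = a := by
  induction m with
  | zero => rfl
  | succ m ih => rw [lit_succ, ih, ha]

lemma lit_J0 (z : J) (hz : e * z = 0) (m : ℕ) (hm : 1 ≤ m) : lit e m z = 0 := by
  obtain ⟨m', rfl⟩ : ∃ m', m = m' + 1 := ⟨m - 1, by omega⟩
  induction m' with
  | zero => exact hz
  | succ k ih => rw [lit_succ, ih (by omega), mul_zero]

lemma lit_half (t : J) (ht : e*t + e*t = t) (m : ℕ) :
    e * lit e m t + e * lit e m t = lit e m t := by
  induction m with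
  | zero => exact ht
  | succ m ih => rw [lit_succ, ← mul_add, ih]

lemma lit_halfzero (m : ℕ) : ∀ t : J, (e*t + e*t = t) → lit e m t = 0 → t = 0 := by
  induction m with
  | zero => intro t _ h; exact h
  | succ m ih =>
      intro t ht h
      rw [lit_inner] at h
      have het : e*(e*t) + e*(e*t) = e*t := by rw [← mul_add, ht]
      have h0 : e * t = 0 := ih (e*t) het h
      rw [← ht, h0, add_zero]

lemma lit_stable (w : J) (hw : e*(e*w) = e*w) (j : ℕ) (hj : 1 ≤ j) :
    lit e j w = e * w := by
  obtain ⟨j', rfl⟩ : ∃ j', j = j' + 1 := ⟨j - 1, by omega⟩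
  induction j' with
  | zero => rfl
  | succ k ih => rw [lit_succ, ih (by omega), hw]

include hJordan h2 hid

lemma L2zero (u : J) (h : e * (e * u) = 0) : e * u = 0 := by
  have hc := cubicL hJordan h2 e hid u
  rw [h] at hc
  simp only [mul_zero, add_zero, zero_add] at hc
  exact hc

lemma litL0 (m : ℕ) : ∀ u : J, lit e (m+1) u = 0 → e * u = 0 := by
  induction m with
  | zero => intro u h; exact h
  | succ m ih =>
      intro u h
      rw [lit_inner] at h
      exact L2zero hJordan h2 e hid u (ih (e*u) h)

-- components
lemma comp1 (u : J) : e * ((e*(e*u) + e*(e*u)) - e*u) = (e*(e*u) + e*(e*u)) - e*u := by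
  have hc := cubicL hJordan h2 e hid u
  have h9 : e * ((e*(e*u) + e*(e*u)) - e*u) - ((e*(e*u) + e*(e*u)) - e*u)
      = (e*u + (e*(e*(e*u)) + e*(e*(e*u)))) - (e*(e*u) + (e*(e*u) + e*(e*u))) := by
    simp only [mul_sub, mul_add]; try abel
  rw [hc, sub_self] at h9
  exact sub_eq_zero.mp h9

lemma compH (u : J) :
    e * ((e*u + e*u + (e*u + e*u)) - (e*(e*u) + e*(e*u) + (e*(e*u) + e*(e*u))))
    + e * ((e*u + e*u + (e*u + e*u)) - (e*(e*u) + e*(e*u) + (e*(e*u) + e*(e*u))))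
    = (e*u + e*u + (e*u + e*u)) - (e*(e*u) + e*(e*u) + (e*(e*u) + e*(e*u))) := by
  have hc := cubicL hJordan h2 e hid u
  have h9 : (e * ((e*u + e*u + (e*u + e*u)) - (e*(e*u) + e*(e*u) + (e*(e*u) + e*(e*u))))
      + e * ((e*u + e*u + (e*u + e*u)) - (e*(e*u) + e*(e*u) + (e*(e*u) + e*(e*u)))))
      - ((e*u + e*u + (e*u + e*u)) - (e*(e*u) + e*(e*u) + (e*(e*u) + e*(e*u))))
      = ((e*(e*u) + (e*(e*u) + e*(e*u))) - (e*u + (e*(e*(e*u)) + e*(e*(e*u)))))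
        + (((e*(e*u) + (e*(e*u) + e*(e*u))) - (e*u + (e*(e*(e*u)) + e*(e*(e*u)))))
          + (((e*(e*u) + (e*(e*u) + e*(e*u))) - (e*u + (e*(e*(e*u)) + e*(e*(e*u)))))
            + ((e*(e*u) + (e*(e*u) + e*(e*u))) - (e*u + (e*(e*(e*u)) + e*(e*(e*u))))))) := by
    simp only [mul_sub, mul_add]; abel
  rw [hc, sub_self] at h9
  simp only [add_zero] at h9
  exact sub_eq_zero.mp h9

lemma comp0 (u : J) :
    e * ((u + (e*(e*u) + e*(e*u))) - (e*u + (e*u + e*u))) = 0 := by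
  have hc := cubicL hJordan h2 e hid u
  have h9 : e * ((u + (e*(e*u) + e*(e*u))) - (e*u + (e*u + e*u)))
      = (e*u + (e*(e*(e*u)) + e*(e*(e*u)))) - (e*(e*u) + (e*(e*u) + e*(e*u))) := by
    simp only [mul_sub, mul_add]; try abel
  rw [hc, sub_self] at h9
  exact h9

lemma compSum (u : J) :
    ((e*(e*u) + e*(e*u)) - e*u)
    + ((e*u + e*u + (e*u + e*u)) - (e*(e*u) + e*(e*u) + (e*(e*u) + e*(e*u))))
    + ((u + (e*(e*u) + e*(e*u))) - (e*u + (e*u + e*u))) = u := by abel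

end Core2

section Desc
variable {J : Type*} [NonUnitalNonAssocCommRing J]
variable (e : J)

lemma rnm_J0mem (hmul0 : ∀ z w : J, e*z = 0 → e*w = 0 → e*(z*w) = 0) :
    ∀ (l : List J), (∀ z ∈ l, e * z = 0) → ∀ v : J, e * v = 0 →
      e * rnm (l ++ [v]) = 0 := by
  intro l
  induction l with
  | nil => intro _ v hv; simpa [rnm_single] using hv
  | cons a t ih =>
      intro hl v hv
      rw [List.cons_append, rnm_cons' _ _ (by simp)]
      exact hmul0 a _ (hl a (by simp)) (ih (fun z hz => hl z (by simp [hz])) v hv)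

lemma rnm_J0J1 (hJ01 : ∀ z a : J, e*z = 0 → e*a = a → z * a = 0) :
    ∀ (l : List J), l ≠ [] → (∀ z ∈ l, e * z = 0) → ∀ a : J, e * a = a →
      rnm (l ++ [a]) = 0 := by
  intro l
  induction l with
  | nil => intro h; exact absurd rfl h
  | cons z t ih =>
      intro _ hl a ha
      rcases eq_or_ne t [] with rfl | ht
      · show rnm [z, a] = 0
        show z * a = 0
        exact hJ01 z a (hl z (by simp)) ha
      · rw [List.cons_append, rnm_cons' _ _ (by simp),
          ih ht (fun w hw => hl w (by simp [hw])) a ha, mul_zero]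

lemma descJ0 (hmul0 : ∀ z w : J, e*z = 0 → e*w = 0 → e*(z*w) = 0)
    (hcond2 : ∀ a ∈ peirce0 e, (∀ t ∈ peirce0 e, t * a = 0) → a = 0) :
    ∀ (m : ℕ) (v : J), e * v = 0 →
      (∀ l : List J, (∀ z ∈ l, e * z = 0) → l.length = m → rnm (l ++ [v]) = 0) →
      v = 0 := by
  intro m
  induction m with
  | zero =>
      intro v hv H
      simpa [rnm_single] using H [] (by simp) rfl
  | succ m ih =>
      intro v hv H
      refine ih v hv ?_
      intro l hl hlen
      refine hcond2 _ (rnm_J0mem e hmul0 l hl v hv) ?_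
      intro t ht
      have := H (t :: l) (by
        intro z hz
        rcases List.mem_cons.mp hz with rfl | hz'
        · exact ht
        · exact hl z hz') (by simp [hlen])
      rw [List.cons_append, rnm_cons' _ _ (by simp)] at this
      exact this

end Desc

section Phi
variable {J J' : Type*} [NonUnitalNonAssocCommRing J] [NonUnitalNonAssocCommRing J']
variable (n : ℕ) (hn : 2 ≤ n) (φ : J → J') (hmul : IsNMulMap n φ)
include hn hmul

lemma extmul : ∀ (m : ℕ), 1 ≤ m → ∀ l : List J, l.length = m * (n-1) + 1 →
    φ (rnm l) = rnm (l.map φ) := by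
  intro m
  induction m with
  | zero => omega
  | succ m ih =>
      intro _ l hl
      rcases Nat.eq_zero_or_pos m with rfl | hm
      · exact hmul l (by omega)
      · have hge : n - 1 ≤ l.length := by
          rw [hl]
          have h1 : n - 1 ≤ (m+1) * (n-1) := Nat.le_mul_of_pos_left (n-1) (by omega)
          omega
        have hlen1 : (l.take (n-1)).length = n - 1 := by
          rw [List.length_take]; omega
        have hlen2 : (l.drop (n-1)).length = m * (n-1) + 1 := by
          rw [List.length_drop, hl]
          have h1 : (m+1)*(n-1) = m*(n-1) + (n-1) := by ring
          omega
        have hne2 : l.drop (n-1) ≠ [] := by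
          intro h; rw [h] at hlen2; simp at hlen2
        have hsplit : l.take (n-1) ++ l.drop (n-1) = l := List.take_append_drop _ l
        calc φ (rnm l) = φ (rnm (l.take (n-1) ++ l.drop (n-1))) := by rw [hsplit]
          _ = φ (rnm (l.take (n-1) ++ [rnm (l.drop (n-1))])) := by
              rw [rnm_nest _ _ hne2]
          _ = rnm ((l.take (n-1) ++ [rnm (l.drop (n-1))]).map φ) := by
              refine hmul _ ?_
              simp [hlen1]; omega
          _ = rnm ((l.take (n-1)).map φ ++ [φ (rnm (l.drop (n-1)))]) := by
              rw [List.map_append]; rfl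
          _ = rnm ((l.take (n-1)).map φ ++ [rnm ((l.drop (n-1)).map φ)]) := by
              rw [ih hm _ hlen2]
          _ = rnm ((l.take (n-1)).map φ ++ (l.drop (n-1)).map φ) := by
              rw [← rnm_nest _ _ (by simpa using hne2)]
          _ = rnm (l.map φ) := by rw [← List.map_append, hsplit]

lemma phiP (L : List J) (hL : L.length = 4 * (n-1)) (x : J) :
    φ (rnm (L ++ [x])) = rnm (L.map φ ++ [φ x]) := by
  have h := extmul n hn φ hmul 4 (by omega) (L ++ [x]) (by simp [hL])
  rw [h, List.map_append]
  rfl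

lemma phi0 (hsurj : Function.Surjective φ) : φ 0 = 0 := by
  obtain ⟨u, hu⟩ := hsurj 0
  have h := hmul (List.replicate (n-1) u ++ [(0:J)]) (by simp; omega)
  rw [rnm_last_zero _ (rep_ne_nil (n-1) (by omega) u)] at h
  rw [List.map_append, List.map_replicate, hu] at h
  rw [show List.map φ [(0:J)] = [φ 0] from rfl] at h
  rw [rnm_rep_zero_head (n-1) (by omega) (φ 0)] at h
  exact h

end Phi

section Main
variable {J J' : Type*} [NonUnitalNonAssocCommRing J] [NonUnitalNonAssocCommRing J']
variable (hJordan : ∀ x y : J, ((x*x)*y)*x = (x*x)*(y*x))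
variable (h2 : ∀ x : J, x + x = 0 → x = 0)
variable (e : J) (hid : e * e = e)
variable (n : ℕ) (hn : 2 ≤ n) (φ : J → J')
variable (hbij : Function.Bijective φ) (hmul : IsNMulMap n φ)
include hJordan h2 hid hn hbij hmul

lemma lemA (hcond2 : ∀ a ∈ peirce0 e, (∀ t ∈ peirce0 e, t * a = 0) → a = 0)
    (a b : J) (ha : e * a = a) (hb : e * b = 0) :
    φ (a + b) = φ a + φ b := by
  have hphi0 : φ 0 = 0 := phi0 n hn φ hmul hbij.2
  set K := 4 * (n - 1) with hK
  have hK4 : 4 ≤ K := by omega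
  obtain ⟨c, hc⟩ := hbij.2 (φ a + φ b)
  have tool : ∀ L : List J, L.length = K →
      φ (rnm (L ++ [c])) = φ (rnm (L ++ [a])) + φ (rnm (L ++ [b])) := by
    intro L hL
    have hne : L.map φ ≠ [] := by
      intro h
      have h' : L = [] := by simpa using h
      rw [h'] at hL
      simp at hL
      omega
    rw [phiP n hn φ hmul L hL c, hc, rnm_last_add _ hne,
      ← phiP n hn φ hmul L hL a, ← phiP n hn φ hmul L hL b]
  -- probe (i)
  have hrepK : (List.replicate K e).length = K := by simp
  have h1 := tool (List.replicate K e) hrepK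
  rw [rnm_replicate, rnm_replicate, rnm_replicate, lit_one e a ha K,
    lit_J0 e b hb K (by omega), hphi0, add_zero] at h1
  have h1' : lit e K c = a := hbij.1 h1
  set u := c - (a + b) with hu
  have hcab : c = a + b + u := by rw [hu]; abel
  have hLu : e * u = 0 := by
    have h3 : lit e K c = lit e K a + lit e K b + lit e K u := by
      rw [hcab, lit_add, lit_add]
    rw [h1', lit_one e a ha K, lit_J0 e b hb K (by omega), add_zero] at h3
    have h4 : lit e K u = 0 := (left_eq_add.mp h3).symm ▸ rfl
    obtain ⟨m, hm⟩ : ∃ m, K = m + 1 := ⟨K - 1, by omega⟩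
    rw [hm] at h4
    exact litL0 hJordan h2 e hid m u h4
  have hzero : ∀ l : List J, (∀ z ∈ l, e * z = 0) → l.length = K →
      rnm (l ++ [u]) = 0 := by
    intro l hl hlen
    have hlne : l ≠ [] := by
      intro h; rw [h] at hlen; simp at hlen; omega
    have hA0 : rnm (l ++ [a]) = 0 :=
      rnm_J0J1 e (fun z a' hz ha' => J0mulJ1 hJordan h2 e hid a' z ha' hz) l hlne hl a ha
    have t1 := tool l hlen
    rw [hA0, hphi0, zero_add] at t1
    have t2 : rnm (l ++ [c]) = rnm (l ++ [b]) := hbij.1 t1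
    have t3 : rnm (l ++ [c]) = rnm (l ++ [a + b]) + rnm (l ++ [u]) := by
      rw [hcab]; exact rnm_last_add _ hlne _ _
    rw [rnm_last_add _ hlne a b, hA0, zero_add, t2] at t3
    exact (left_eq_add.mp t3)
  have hu0 : u = 0 := descJ0 e
    (fun z w hz hw => by
      rw [mul_comm z w, ← commL0 hJordan h2 e hid z hz w, hw, zero_mul])
    hcond2 K u hLu hzero
  have : c = a + b := by rw [hcab, hu0, add_zero]
  rw [← this, hc]

end Main

section MainB
variable {J J' : Type*} [NonUnitalNonAssocCommRing J] [NonUnitalNonAssocCommRing J']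
variable (hJordan : ∀ x y : J, ((x*x)*y)*x = (x*x)*(y*x))
variable (h2 : ∀ x : J, x + x = 0 → x = 0)
variable (e : J) (hid : e * e = e)
variable (n : ℕ) (hn : 2 ≤ n) (φ : J → J')
variable (hbij : Function.Bijective φ) (hmul : IsNMulMap n φ)
include hJordan h2 hid hn hbij hmul

lemma lemB (hcond1 : ∀ a ∈ peirce1 e, (∀ t ∈ peirceHalf e, t * a = 0) → a = 0)
    (hcond1' : ∀ a ∈ peirce0 e, (∀ t ∈ peirceHalf e, t * a = 0) → a = 0)
    (hcond3 : ∀ a ∈ peirceHalf e, (∀ t ∈ peirce0 e, t * a = 0) → a = 0)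
    (a b : J) (ha : e * a = a) (hb : e * b + e * b = b) :
    φ (a + b) = φ a + φ b := by
  have hphi0 : φ 0 = 0 := phi0 n hn φ hmul hbij.2
  set K := 4 * (n - 1) with hK
  have hK4 : 4 ≤ K := by omega
  obtain ⟨c, hc⟩ := hbij.2 (φ a + φ b)
  have tool : ∀ L : List J, L.length = K →
      φ (rnm (L ++ [c])) = φ (rnm (L ++ [a])) + φ (rnm (L ++ [b])) := by
    intro L hL
    have hne : L.map φ ≠ [] := by
      intro h
      have h' : L = [] := by simpa using h
      rw [h'] at hL
      simp at hL
      omega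
    rw [phiP n hn φ hmul L hL c, hc, rnm_last_add _ hne,
      ← phiP n hn φ hmul L hL a, ← phiP n hn φ hmul L hL b]
  set u := c - (a + b) with hu
  have hcab : c = a + b + u := by rw [hu]; abel
  set u1 := (e*(e*u) + e*(e*u)) - e*u with hu1d
  set uH := (e*u + e*u + (e*u + e*u)) - (e*(e*u) + e*(e*u) + (e*(e*u) + e*(e*u))) with huHd
  set u0 := (u + (e*(e*u) + e*(e*u))) - (e*u + (e*u + e*u)) with hu0d
  have hcomp1 : e * u1 = u1 := comp1 hJordan h2 e hid u
  have hcompH : e * uH + e * uH = uH := compH hJordan h2 e hid u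
  have hcomp0 : e * u0 = 0 := comp0 hJordan h2 e hid u
  have hsum : u1 + uH + u0 = u := compSum hJordan h2 e hid u
  -- probe (vi): u1 = 0
  have hu1 : u1 = 0 := by
    refine hcond1 u1 hcomp1 ?_
    intro t ht
    replace ht : e * t + e * t = t := ht
    have step1 : ∀ z : J, e * z = 0 → z * lit e (K-3) (t * (e * u)) = 0 := by
      intro z hz
      have hLlen : (z :: (List.replicate (K-3) e ++ [t, e])).length = K := by
        simp; omega
      have hbranch : rnm ((z :: (List.replicate (K-3) e ++ [t, e])) ++ [b]) = 0 := by
        rw [evalE3]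
        have hw : e*(e*(t*(e*b))) = e*(t*(e*b)) :=
          sqHalfMixed hJordan h2 e hid t (e*b) ht (halfE hJordan h2 e hid b hb)
        rw [lit_stable e (t*(e*b)) hw (K-3) (by omega), mul_comm]
        exact J1mulJ0 hJordan h2 e hid (e*(t*(e*b))) z hw hz
      have t1 := tool _ hLlen
      rw [hbranch, hphi0, add_zero] at t1
      have t2 := hbij.1 t1
      have t3 : rnm ((z :: (List.replicate (K-3) e ++ [t, e])) ++ [c])
          = rnm ((z :: (List.replicate (K-3) e ++ [t, e])) ++ [a+b])
            + rnm ((z :: (List.replicate (K-3) e ++ [t, e])) ++ [u]) := by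
        rw [hcab]; exact rnm_last_add _ (by simp) _ _
      rw [rnm_last_add _ (by simp) a b, hbranch, add_zero, t2] at t3
      have hU := left_eq_add.mp t3
      rw [evalE3] at hU
      exact hU
    have heu : e * u = u1 + e * uH := by
      have h5 : e * u = e * u1 + e * uH + e * u0 := by
        conv_lhs => rw [← hsum]
        rw [mul_add, mul_add]
      rw [hcomp1, hcomp0, add_zero] at h5
      exact h5
    have key : ∀ z : J, e * z = 0 → z * lit e (K-3) (t * u1) = 0 := by
      intro z hz
      have h := step1 z hz
      rw [heu, mul_add, lit_add, mul_add] at h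
      have hsecond : z * lit e (K-3) (t * (e * uH)) = 0 := by
        have hw : e*(e*(t*(e*uH))) = e*(t*(e*uH)) :=
          sqHalfMixed hJordan h2 e hid t (e*uH) ht (halfE hJordan h2 e hid uH hcompH)
        rw [lit_stable e _ hw (K-3) (by omega), mul_comm]
        exact J1mulJ0 hJordan h2 e hid _ z hw hz
      rw [hsecond, add_zero] at h
      exact h
    have hhalf : e*(t*u1) + e*(t*u1) = t*u1 := by
      rw [mul_comm t u1]
      exact halfMul1 hJordan h2 e hid u1 t hcomp1 ht
    have hX : lit e (K-3) (t*u1) = 0 :=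
      hcond3 _ (lit_half e (t*u1) hhalf (K-3)) (fun z hz => key z hz)
    exact lit_halfzero e (K-3) (t*u1) hhalf hX
  -- probe (i): uH = 0
  have huH : uH = 0 := by
    have key : ∀ z : J, e * z = 0 → z * lit e (K-1) uH = 0 := by
      intro z hz
      have hLlen : (z :: List.replicate (K-1) e).length = K := by simp; omega
      have hbranch : rnm ((z :: List.replicate (K-1) e) ++ [a]) = 0 := by
        rw [evalE1, lit_one e a ha, mul_comm]
        exact J1mulJ0 hJordan h2 e hid a z ha hz
      have t1 := tool _ hLlen
      rw [hbranch, hphi0, zero_add] at t1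
      have t2 := hbij.1 t1
      have t3 : rnm ((z :: List.replicate (K-1) e) ++ [c])
          = rnm ((z :: List.replicate (K-1) e) ++ [a+b])
            + rnm ((z :: List.replicate (K-1) e) ++ [u]) := by
        rw [hcab]; exact rnm_last_add _ (by simp) _ _
      rw [rnm_last_add _ (by simp) a b, hbranch, zero_add, t2] at t3
      have hU := left_eq_add.mp t3
      rw [evalE1] at hU
      have hdec : lit e (K-1) u = u1 + lit e (K-1) uH := by
        conv_lhs => rw [← hsum]
        rw [lit_add, lit_add, lit_one e u1 hcomp1,
          lit_J0 e u0 hcomp0 (K-1) (by omega), add_zero]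
      rw [hdec, mul_add,
        show z * u1 = 0 from by
          rw [mul_comm]; exact J1mulJ0 hJordan h2 e hid u1 z hcomp1 hz,
        zero_add] at hU
      exact hU
    have hX : lit e (K-1) uH = 0 :=
      hcond3 _ (lit_half e uH hcompH (K-1)) (fun z hz => key z hz)
    exact lit_halfzero e (K-1) uH hcompH hX
  have huu : u = u0 := by rw [← hsum, hu1, huH]; abel
  -- probe (ii): u0 = 0
  have hu0 : u0 = 0 := by
    refine hcond1' u0 hcomp0 ?_
    intro t ht
    replace ht : e * t + e * t = t := ht
    have key : ∀ z : J, e * z = 0 → z * lit e (K-2) (t * u0) = 0 := by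
      intro z hz
      have hLlen : (z :: (List.replicate (K-2) e ++ [t])).length = K := by simp; omega
      have hbranch : rnm ((z :: (List.replicate (K-2) e ++ [t])) ++ [b]) = 0 := by
        rw [evalE2]
        have hw : e*(e*(t*b)) = e*(t*b) := sqHalfMixed hJordan h2 e hid t b ht hb
        rw [lit_stable e _ hw (K-2) (by omega), mul_comm]
        exact J1mulJ0 hJordan h2 e hid _ z hw hz
      have t1 := tool _ hLlen
      rw [hbranch, hphi0, add_zero] at t1
      have t2 := hbij.1 t1
      have t3 : rnm ((z :: (List.replicate (K-2) e ++ [t])) ++ [c])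
          = rnm ((z :: (List.replicate (K-2) e ++ [t])) ++ [a+b])
            + rnm ((z :: (List.replicate (K-2) e ++ [t])) ++ [u]) := by
        rw [hcab]; exact rnm_last_add _ (by simp) _ _
      rw [rnm_last_add _ (by simp) a b, hbranch, add_zero, t2] at t3
      have hU := left_eq_add.mp t3
      rw [evalE2] at hU
      rw [huu] at hU
      exact hU
    have hhalf : e*(t*u0) + e*(t*u0) = t*u0 := by
      rw [mul_comm t u0]
      exact halfMul0 hJordan h2 e hid u0 t hcomp0 ht
    have hX : lit e (K-2) (t*u0) = 0 :=
      hcond3 _ (lit_half e (t*u0) hhalf (K-2)) (fun z hz => key z hz)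
    exact lit_halfzero e (K-2) (t*u0) hhalf hX
  have hufin : u = 0 := by rw [huu, hu0]
  have hcf : c = a + b := by rw [hcab, hufin, add_zero]
  rw [← hcf, hc]

end MainB


theorem nMulIso_add_components {J J' : Type*} [NonUnitalNonAssocCommRing J] [NonUnitalNonAssocCommRing J']
    (hJordan : ∀ x y : J, ((x * x) * y) * x = (x * x) * (y * x))
    (hJordan' : ∀ x y : J', ((x * x) * y) * x = (x * x) * (y * x))
    (h2 : ∀ x : J, x + x = 0 → x = 0)
    (e : J) (hid : e * e = e) (hne : e ≠ 0) (hnu : ∃ x : J, e * x ≠ x)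
    (hcond1 : ∀ a ∈ peirce1 e, (∀ t ∈ peirceHalf e, t * a = 0) → a = 0)
    (hcond1' : ∀ a ∈ peirce0 e, (∀ t ∈ peirceHalf e, t * a = 0) → a = 0)
    (hcond2 : ∀ a ∈ peirce0 e, (∀ t ∈ peirce0 e, t * a = 0) → a = 0)
    (hcond3 : ∀ a ∈ peirceHalf e, (∀ t ∈ peirce0 e, t * a = 0) → a = 0)
    (n : ℕ) (hn : 2 ≤ n) (φ : J → J')
    (hbij : Function.Bijective φ) (hmul : IsNMulMap n φ) :
    ∀ a₁ ∈ peirce1 e, ∀ a₂ ∈ peirceHalf e, ∀ a₀ ∈ peirce0 e,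
      φ (a₁ + a₂ + a₀) = φ a₁ + φ a₂ + φ a₀ := by

  intro a₁ hm1 a₂ hm2 a₀ hm0
  have ha1 : e * a₁ = a₁ := hm1
  have ha2 : e * a₂ + e * a₂ = a₂ := hm2
  have ha0 : e * a₀ = 0 := hm0
  have hphi0 : φ 0 = 0 := phi0 n hn φ hmul hbij.2
  set K := 4 * (n - 1) with hK
  have hK4 : 4 ≤ K := by omega
  obtain ⟨c, hc⟩ := hbij.2 (φ a₁ + φ a₂ + φ a₀)
  have tool : ∀ L : List J, L.length = K →
      φ (rnm (L ++ [c]))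
        = φ (rnm (L ++ [a₁])) + φ (rnm (L ++ [a₂])) + φ (rnm (L ++ [a₀])) := by
    intro L hL
    have hne' : L.map φ ≠ [] := by
      intro h
      have h' : L = [] := by simpa using h
      rw [h'] at hL
      simp at hL
      omega
    rw [phiP n hn φ hmul L hL c, hc,
      rnm_last_add _ hne' (φ a₁ + φ a₂) (φ a₀),
      rnm_last_add _ hne' (φ a₁) (φ a₂),
      ← phiP n hn φ hmul L hL a₁, ← phiP n hn φ hmul L hL a₂,
      ← phiP n hn φ hmul L hL a₀]
  set u := c - (a₁ + a₂ + a₀) with hu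
  have hcab : c = a₁ + a₂ + a₀ + u := by rw [hu]; abel
  -- probe (i)
  have hLu : e * u = 0 := by
    have h1 := tool (List.replicate K e) (by simp)
    rw [rnm_replicate, rnm_replicate, rnm_replicate, rnm_replicate,
      lit_one e a₁ ha1 K, lit_J0 e a₀ ha0 K (by omega), hphi0, add_zero] at h1
    have hB := lemB hJordan h2 e hid n hn φ hbij hmul hcond1 hcond1' hcond3
      a₁ (lit e K a₂) ha1 (lit_half e a₂ ha2 K)
    rw [← hB] at h1
    have h1' : lit e K c = a₁ + lit e K a₂ := hbij.1 h1
    have h3 : lit e K c = lit e K a₁ + lit e K a₂ + lit e K a₀ + lit e K u := by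
      rw [hcab, lit_add, lit_add, lit_add]
    rw [h1', lit_one e a₁ ha1 K, lit_J0 e a₀ ha0 K (by omega), add_zero] at h3
    have h4 : lit e K u = 0 := left_eq_add.mp h3
    obtain ⟨m, hm⟩ : ∃ m, K = m + 1 := ⟨K - 1, by omega⟩
    rw [hm] at h4
    exact litL0 hJordan h2 e hid m u h4
  -- probe (ii)
  have hufin : u = 0 := by
    refine hcond1' u hLu ?_
    intro t ht
    replace ht : e * t + e * t = t := ht
    have key : ∀ z : J, e * z = 0 → z * lit e (K-2) (t * u) = 0 := by
      intro z hz
      have hLlen : (z :: (List.replicate (K-2) e ++ [t])).length = K := by simp; omega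
      have hb2 : rnm ((z :: (List.replicate (K-2) e ++ [t])) ++ [a₂]) = 0 := by
        rw [evalE2]
        have hw : e*(e*(t*a₂)) = e*(t*a₂) := sqHalfMixed hJordan h2 e hid t a₂ ht ha2
        rw [lit_stable e _ hw (K-2) (by omega), mul_comm]
        exact J1mulJ0 hJordan h2 e hid _ z hw hz
      have t1 := tool _ hLlen
      rw [hb2, hphi0, add_zero] at t1
      have hA := lemA hJordan h2 e hid n hn φ hbij hmul hcond2 a₁ a₀ ha1 ha0
      have hrec : φ (rnm ((z :: (List.replicate (K-2) e ++ [t])) ++ [a₁]))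
          + φ (rnm ((z :: (List.replicate (K-2) e ++ [t])) ++ [a₀]))
          = φ (rnm ((z :: (List.replicate (K-2) e ++ [t])) ++ [a₁ + a₀])) := by
        have hneφ : (z :: (List.replicate (K-2) e ++ [t])).map φ ≠ [] := by simp
        rw [phiP n hn φ hmul _ hLlen (a₁ + a₀), hA,
          rnm_last_add _ hneφ (φ a₁) (φ a₀),
          ← phiP n hn φ hmul _ hLlen a₁, ← phiP n hn φ hmul _ hLlen a₀]
      rw [hrec] at t1
      have t2 := hbij.1 t1
      have hcab' : c = (a₁ + a₀) + (a₂ + u) := by rw [hu]; abel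
      have t3 : rnm ((z :: (List.replicate (K-2) e ++ [t])) ++ [c])
          = rnm ((z :: (List.replicate (K-2) e ++ [t])) ++ [a₁ + a₀])
            + (rnm ((z :: (List.replicate (K-2) e ++ [t])) ++ [a₂])
              + rnm ((z :: (List.replicate (K-2) e ++ [t])) ++ [u])) := by
        rw [hcab', rnm_last_add _ (by simp) (a₁ + a₀) (a₂ + u),
          rnm_last_add _ (by simp) a₂ u]
      rw [t2, hb2, zero_add] at t3
      have t4 := left_eq_add.mp t3
      rw [evalE2] at t4
      exact t4
    have hhalf : e*(t*u) + e*(t*u) = t*u := by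
      rw [mul_comm t u]
      exact halfMul0 hJordan h2 e hid u t hLu ht
    have hX : lit e (K-2) (t*u) = 0 :=
      hcond3 _ (lit_half e (t*u) hhalf (K-2)) (fun z hz => key z hz)
    exact lit_halfzero e (K-2) (t*u) hhalf hX
  have hcf : c = a₁ + a₂ + a₀ := by rw [hcab, hufin, add_zero]
  rw [← hcf, hc]
end

section
/- Under the hypotheses of the preceding setting (J a 2-torsion free Jordan ring with nontrivial idempotent e satisfying conditions (i)–(iii), and φ : J → J' a bijective n-multiplicative isomorphism onto a Jordan ring J'), for all a, b ∈ J_{1/2} and a₀ ∈ J₀ one has φ(a·a₀ + b) = φ(a·a₀) + φ(b). -/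
section JRDHelpers
variable {R : Type*} [NonUnitalNonAssocCommRing R]

private lemma jrd_rnm_cons (x : R) (l : List R) (hl : l ≠ []) : rnm (x :: l) = x * rnm l := by
  cases l with
  | nil => exact absurd rfl hl
  | cons y t => rfl

private lemma jrd_rnm_append_singleton (L : List R) (z : R) :
    rnm (L ++ [z]) = L.foldr (· * ·) z := by
  induction L with
  | nil => rfl
  | cons a t ih =>
      rw [List.cons_append, jrd_rnm_cons a (t ++ [z]) (by simp), ih, List.foldr_cons]

private lemma jrd_foldr_mul_add (L : List R) (x y : R) :
    L.foldr (· * ·) (x + y) = L.foldr (· * ·) x + L.foldr (· * ·) y := by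
  induction L with
  | nil => rfl
  | cons a t ih => simp only [List.foldr_cons, ih, mul_add]

private lemma jrd_foldr_mul_sub (L : List R) (x y : R) :
    L.foldr (· * ·) (x - y) = L.foldr (· * ·) x - L.foldr (· * ·) y := by
  induction L with
  | nil => rfl
  | cons a t ih => simp only [List.foldr_cons, ih, mul_sub]

private lemma jrd_foldr_mul_zero (L : List R) : L.foldr (· * ·) (0 : R) = 0 := by
  induction L with
  | nil => rfl
  | cons a t ih => simp only [List.foldr_cons, ih, mul_zero]

private lemma jrd_rnm_replicate_zero (m : ℕ) : rnm (List.replicate m (0:R)) = 0 := by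
  cases m with
  | zero => rfl
  | succ m => rw [List.replicate_succ', jrd_rnm_append_singleton, jrd_foldr_mul_zero]

private lemma jrd_it_add (w : R) (m : ℕ) (x y : R) :
    (w * ·)^[m] (x + y) = (w * ·)^[m] x + (w * ·)^[m] y := by
  induction m with
  | zero => rfl
  | succ m ih =>
      rw [Function.iterate_succ_apply', Function.iterate_succ_apply',
        Function.iterate_succ_apply', ih, mul_add]

private lemma jrd_it_zero (w : R) (m : ℕ) : (w * ·)^[m] (0 : R) = 0 := by
  induction m with
  | zero => rfl
  | succ m ih => rw [Function.iterate_succ_apply', ih]; exact mul_zero w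

private lemma jrd_it_fix (w x : R) (h : w * x = x) (m : ℕ) : (w * ·)^[m] x = x := by
  induction m with
  | zero => rfl
  | succ m ih => rw [Function.iterate_succ_apply', ih]; exact h

private lemma jrd_foldr_replicate (w : R) (m : ℕ) (s : R) :
    (List.replicate m w).foldr (· * ·) s = (w * ·)^[m] s := by
  induction m with
  | zero => rfl
  | succ m ih =>
      rw [List.replicate_succ, List.foldr_cons, ih, Function.iterate_succ_apply']

private lemma jrd_rnm_replicate_append_two (w : R) (m : ℕ) (x y : R) :
    rnm (List.replicate m w ++ [x, y]) = (w * ·)^[m] (x * y) := by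
  induction m with
  | zero => rfl
  | succ m ih =>
      rw [List.replicate_succ, List.cons_append, jrd_rnm_cons _ _ (by simp), ih,
        Function.iterate_succ_apply']

end JRDHelpers

theorem nMulIso_add_half_prod {J J' : Type*} [NonUnitalNonAssocCommRing J] [NonUnitalNonAssocCommRing J']
    (hJordan : ∀ x y : J, ((x * x) * y) * x = (x * x) * (y * x))
    (hJordan' : ∀ x y : J', ((x * x) * y) * x = (x * x) * (y * x))
    (h2 : ∀ x : J, x + x = 0 → x = 0)
    (e : J) (hid : e * e = e) (hne : e ≠ 0) (hnu : ∃ x : J, e * x ≠ x)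
    (hcond1 : ∀ a ∈ peirce1 e, (∀ t ∈ peirceHalf e, t * a = 0) → a = 0)
    (hcond1' : ∀ a ∈ peirce0 e, (∀ t ∈ peirceHalf e, t * a = 0) → a = 0)
    (hcond2 : ∀ a ∈ peirce0 e, (∀ t ∈ peirce0 e, t * a = 0) → a = 0)
    (hcond3 : ∀ a ∈ peirceHalf e, (∀ t ∈ peirce0 e, t * a = 0) → a = 0)
    (n : ℕ) (hn : 2 ≤ n) (φ : J → J')
    (hbij : Function.Bijective φ) (hmul : IsNMulMap n φ) :
    ∀ a ∈ peirceHalf e, ∀ b ∈ peirceHalf e, ∀ a₀ ∈ peirce0 e,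
      φ (a * a₀ + b) = φ (a * a₀) + φ b := by
  obtain ⟨k, rfl⟩ : ∃ k, n = k + 2 := ⟨n - 2, by omega⟩
  clear hn
  -- conditions in unfolded form
  have cond1 : ∀ a : J, e*a = a → (∀ t : J, (e*t + e*t = t) → t * a = 0) → a = 0 :=
    fun a ha h => hcond1 a ha (fun t ht => h t ht)
  have cond1' : ∀ a : J, e*a = 0 → (∀ t : J, (e*t + e*t = t) → t * a = 0) → a = 0 :=
    fun a ha h => hcond1' a ha (fun t ht => h t ht)
  have cond2 : ∀ a : J, e*a = 0 → (∀ t : J, e*t = 0 → t * a = 0) → a = 0 :=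
    fun a ha h => hcond2 a ha (fun t ht => h t ht)
  have cond3 : ∀ a : J, (e*a + e*a = a) → (∀ t : J, e*t = 0 → t * a = 0) → a = 0 :=
    fun a ha h => hcond3 a ha (fun t ht => h t ht)
  clear hcond1 hcond1' hcond2 hcond3 hne hnu hJordan'
  -- basic cancellation
  have hcan : ∀ x y : J, x + x = y + y → x = y := by
    intro x y hxy
    have h0 : (x - y) + (x - y) = 0 := by
      rw [sub_add_sub_comm, hxy, sub_self]
    exact sub_eq_zero.mp (h2 _ h0)
  have hself : ∀ a : J, a + a = a → a = 0 := by
    intro a ha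
    exact add_left_cancel (ha.trans (add_zero a).symm)
  -- linearized Jordan identities
  have hD1 : ∀ u y : J,
      (e*y)*u + (((e*u)*y)*e + ((e*u)*y)*e) = e*(y*u) + ((e*u)*(y*e) + (e*u)*(y*e)) := by
    intro u y
    have A1 := hJordan (e + u) y
    have A2 := hJordan (e - u) y
    have key : (((e+u)*(e+u))*y)*(e+u) - (((e-u)*(e-u))*y)*(e-u)
        = ((e+u)*(e+u))*(y*(e+u)) - ((e-u)*(e-u))*(y*(e-u)) := by rw [A1, A2]
    simp only [mul_add, add_mul, mul_sub, sub_mul, hid, mul_comm u e] at key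
    rw [hJordan u y] at key
    have key0 := sub_eq_zero_of_eq key
    apply hcan; apply sub_eq_zero.mp
    abel_nf at key0 ⊢
    exact key0
  have hD2 : ∀ u y : J,
      ((u*u)*y)*e + (((e*u)*y)*u + ((e*u)*y)*u) = (u*u)*(y*e) + ((e*u)*(y*u) + (e*u)*(y*u)) := by
    intro u y
    have A1 := hJordan (e + u) y
    have A2 := hJordan (e - u) y
    have key : (((e+u)*(e+u))*y)*(e+u) + (((e-u)*(e-u))*y)*(e-u)
        = ((e+u)*(e+u))*(y*(e+u)) + ((e-u)*(e-u))*(y*(e-u)) := by rw [A1, A2]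
    simp only [mul_add, add_mul, mul_sub, sub_mul, hid, mul_comm u e] at key
    have d0 : (e*y)*e = e*(y*e) := by
      rw [mul_comm (e*y) e, mul_comm y e]
    rw [d0] at key
    have key0 := sub_eq_zero_of_eq key
    apply hcan; apply sub_eq_zero.mp
    abel_nf at key0 ⊢
    exact key0
  have hcubic : ∀ z : J,
      (e*(e*(e*z)) + e*(e*(e*z))) + e*z = e*(e*z) + (e*(e*z) + e*(e*z)) := by
    intro z
    have h := hD1 z e
    rw [hid] at h
    simp only [mul_comm _ e] at h
    abel_nf at h ⊢
    exact h
  -- A-identity and Peirce multiplication rules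
  have hA : ∀ t : J, e*t = 0 → ∀ v : J, (e*v)*t = e*(v*t) := by
    intro t ht v
    have h := hD1 t v
    rw [ht] at h
    simp only [zero_mul, mul_comm t e, ht, zero_mul, add_zero] at h
    exact h
  have hM1 : ∀ x t : J, e*x = x → e*t = 0 → x*t = 0 := by
    intro x t hx ht
    have h := hD1 x t
    rw [ht, hx] at h
    have hte : t*e = 0 := by rw [mul_comm t e, ht]
    rw [hte] at h
    simp only [zero_mul, mul_zero, zero_add, add_zero] at h
    rw [mul_comm (x*t) e, mul_comm t x] at h
    have hez : e*(x*t) = 0 := hself _ h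
    have h1 := hA t ht x
    rw [hx] at h1
    rw [h1, hez]
  have hhe : ∀ u : J, e*u + e*u = u → e*(e*u) + e*(e*u) = e*u := by
    intro u hu
    have := congrArg (fun w => e * w) hu
    simpa [mul_add] using this
  have hhz : ∀ u t : J, (e*u + e*u = u) → e*t = 0 → e*(u*t) + e*(u*t) = u*t := by
    intro u t hu ht
    have h1 : (e*u)*t = e*(u*t) := hA t ht u
    rw [← h1, ← add_mul, hu]
  have hzz : ∀ s t : J, e*s = 0 → e*t = 0 → e*(s*t) = 0 := by
    intro s t hs ht
    rw [← hA t ht s, hs, zero_mul]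
  have hoh : ∀ x u : J, e*x = x → (e*u + e*u = u) →
      (e*(x*u) = x*(e*u)) ∧ (e*(x*u) + e*(x*u) = x*u) := by
    intro x u hx hu
    have h := hD1 x u
    rw [hx] at h
    rw [mul_comm u e] at h
    rw [mul_comm (x*u) e, mul_comm u x, mul_comm (e*u) x] at h
    have hE : e*(x*u) = x*(e*u) := by
      have h2' : (x*(e*u) + e*(x*u)) + e*(x*u) = (x*(e*u) + e*(x*u)) + x*(e*u) := by
        abel_nf at h ⊢; exact h
      exact add_left_cancel h2'
    refine ⟨hE, ?_⟩
    rw [hE, ← mul_add, hu]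
  have hdiagB : ∀ u : J, (e*u + e*u = u) → e*(e*(u*u)) = e*(u*u) := by
    intro u hu
    have h := hD2 u e
    rw [hid] at h
    simp only [mul_comm _ e] at h
    have c1 : (e*(e*u))*u + (e*(e*u))*u = (e*u)*u := by
      rw [← add_mul, hhe u hu]
    have c2 : (e*u)*(e*u) + (e*u)*(e*u) = (e*u)*u := by
      rw [← mul_add, hu]
    rw [c1, c2] at h
    exact add_right_cancel h
  have hB : ∀ u v : J, (e*u + e*u = u) → (e*v + e*v = v) → e*(e*(u*v)) = e*(u*v) := by
    intro u v hu hv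
    have hw : e*(u+v) + e*(u+v) = (u+v) := by
      simp only [mul_add]
      calc e*u + e*v + (e*u + e*v) = (e*u + e*u) + (e*v + e*v) := by abel
        _ = u + v := by rw [hu, hv]
    have h := hdiagB (u+v) hw
    have hexp : (u+v)*(u+v) = u*u + ((u*v + u*v) + v*v) := by
      simp only [mul_add, add_mul, mul_comm v u]; abel
    rw [hexp] at h
    simp only [mul_add] at h
    rw [hdiagB u hu, hdiagB v hv] at h
    apply hcan
    have h2' : (e*(u*u) + e*(v*v)) + (e*(e*(u*v)) + e*(e*(u*v)))
        = (e*(u*u) + e*(v*v)) + (e*(u*v) + e*(u*v)) := by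
      abel_nf at h ⊢; exact h
    exact add_left_cancel h2'
  -- Peirce decomposition
  have hdec : ∀ z : J, ∃ x w t : J, (e*x = x) ∧ (e*w + e*w = w) ∧ (e*t = 0) ∧
      z = x + w + t ∧ e*z = x + e*w := by
    intro z
    have hc := hcubic z
    set A := e*(e*(e*z)) with hA'
    set B := e*(e*z) with hB'
    set C := e*z with hC'
    refine ⟨(B + B) - C, ((C+C)+(C+C)) - ((B+B)+(B+B)), z - (C+C+C) + (B+B),
      ?_, ?_, ?_, by abel, ?_⟩
    · show e*((B+B) - C) = (B+B) - C
      simp only [mul_sub, mul_add, ← hA', ← hB', ← hC']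
      calc (A + A) - B = (((A+A)+C)) - ((B+(B+B))) + ((B+B) - C) := by abel
        _ = ((B+(B+B))) - ((B+(B+B))) + ((B+B) - C) := by rw [hc]
        _ = (B+B) - C := by abel
    · show e*(((C+C)+(C+C)) - ((B+B)+(B+B))) + e*(((C+C)+(C+C)) - ((B+B)+(B+B)))
          = ((C+C)+(C+C)) - ((B+B)+(B+B))
      simp only [mul_sub, mul_add, ← hA', ← hB', ← hC']
      calc ((B+B)+(B+B)) - ((A+A)+(A+A)) + (((B+B)+(B+B)) - ((A+A)+(A+A)))
            = ((B+(B+B)) + (B+(B+B)) + ((B+(B+B)) + (B+(B+B))))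
              - (((A+A)+C) + ((A+A)+C) + (((A+A)+C) + ((A+A)+C)))
              + (((C+C)+(C+C)) - ((B+B)+(B+B))) := by abel
        _ = (((A+A)+C) + ((A+A)+C) + (((A+A)+C) + ((A+A)+C)))
              - (((A+A)+C) + ((A+A)+C) + (((A+A)+C) + ((A+A)+C)))
              + (((C+C)+(C+C)) - ((B+B)+(B+B))) := by rw [hc]
        _ = ((C+C)+(C+C)) - ((B+B)+(B+B)) := by abel
    · show e*(z - (C+C+C) + (B+B)) = 0
      simp only [mul_sub, mul_add, ← hA', ← hB', ← hC']
      calc C - (B+B+B) + (A+A) = (((A+A)+C)) - ((B+(B+B))) + 0 := by abel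
        _ = ((B+(B+B))) - ((B+(B+B))) + 0 := by rw [hc]
        _ = 0 := by abel
    · show C = ((B+B) - C) + e*(((C+C)+(C+C)) - ((B+B)+(B+B)))
      simp only [mul_sub, mul_add, ← hA', ← hB', ← hC']
      calc C = (((A+A)+C) + ((A+A)+C)) - ((B+(B+B)) + (B+(B+B)))
            + (((B+B) - C) + (((B+B)+(B+B)) - ((A+A)+(A+A)))) := by abel
        _ = ((B+(B+B)) + (B+(B+B))) - ((B+(B+B)) + (B+(B+B)))
            + (((B+B) - C) + (((B+B)+(B+B)) - ((A+A)+(A+A)))) := by rw [hc]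
        _ = ((B+B) - C) + (((B+B)+(B+B)) - ((A+A)+(A+A))) := by abel
  have hdisj1h : ∀ x w : J, e*x = x → (e*w + e*w = w) → x + w = 0 → x = 0 ∧ w = 0 := by
    intro x w hx hw hxw
    have h1 : x + e*w = 0 := by
      have := congrArg (fun z => e*z) hxw
      simpa [mul_add, hx] using this
    have h2' : x + e*(e*w) = 0 := by
      have := congrArg (fun z => e*z) h1
      simpa [mul_add, hx] using this
    have hew : e*w = e*(e*w) := add_left_cancel (h1.trans h2'.symm)
    have hew0 : e*w = 0 := by
      apply hself
      calc e*w + e*w = e*(e*w) + e*(e*w) := by rw [← hew]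
        _ = e*w := hhe w hw
    have hw0 : w = 0 := by rw [← hw, hew0, add_zero]
    exact ⟨by rwa [hw0, add_zero] at hxw, hw0⟩
  have hdisjh0 : ∀ w t : J, (e*w + e*w = w) → e*t = 0 → w + t = 0 → w = 0 ∧ t = 0 := by
    intro w t hw ht hwt
    have h1 : e*w = 0 := by
      have := congrArg (fun z => e*z) hwt
      simp only [mul_add, ht, add_zero, mul_zero] at this
      exact this
    have hw0 : w = 0 := by rw [← hw, h1, add_zero]
    exact ⟨hw0, by rwa [hw0, zero_add] at hwt⟩
  -- f = 2e and its iterate facts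
  set jf : J := e + e with hjf
  have hjfH : ∀ u : J, (e*u + e*u = u) → jf * u = u := by
    intro u hu; rw [hjf, add_mul]; exact hu
  have hjfP0 : ∀ t : J, e*t = 0 → jf * t = 0 := by
    intro t ht; rw [hjf, add_mul, ht, add_zero]
  have hjfP1 : ∀ x : J, e*x = x → jf * x = x + x := by
    intro x hx; rw [hjf, add_mul, hx]
  have hFH : ∀ (u : J), (e*u + e*u = u) → ∀ m, (jf * ·)^[m] u = u := by
    intro u hu m; exact jrd_it_fix jf u (hjfH u hu) m
  have hFP1 : ∀ (x : J), e*x = x → ∀ m, (e*((jf * ·)^[m] x) = (jf * ·)^[m] x)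
      ∧ ((jf * ·)^[m] x = 0 → x = 0) := by
    intro x hx m
    induction m with
    | zero => exact ⟨hx, fun h => h⟩
    | succ m ih =>
        constructor
        · rw [Function.iterate_succ_apply', hjfP1 _ ih.1, mul_add, ih.1]
        · intro h
          rw [Function.iterate_succ_apply', hjfP1 _ ih.1] at h
          exact ih.2 (h2 _ h)
  have hEFP0 : ∀ (t : J), e*t = 0 → ∀ m, e*((jf * ·)^[m] t) = 0 := by
    intro t ht m
    induction m with
    | zero => exact ht
    | succ m ih =>
        rw [Function.iterate_succ_apply', hjf, add_mul, ih, add_zero, mul_zero]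
  have hZLEM : ∀ (ξ : J) (m : ℕ), e*((jf * ·)^[m] ξ) = 0 → e*ξ = 0 := by
    intro ξ m h
    obtain ⟨x, w, t, hx, hw, ht, hsum, hez⟩ := hdec ξ
    have hFsum : (jf * ·)^[m] ξ = (jf * ·)^[m] x + w + (jf * ·)^[m] t := by
      rw [hsum, jrd_it_add, jrd_it_add, hFH w hw]
    rw [hFsum, mul_add, mul_add, hEFP0 t ht m, add_zero, (hFP1 x hx m).1] at h
    obtain ⟨hx0, hew0⟩ := hdisj1h _ _ (hFP1 x hx m).1 (hhe w hw) h
    have hx00 : x = 0 := (hFP1 x hx m).2 hx0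
    have hw0 : w = 0 := by rw [← hw, hew0, add_zero]
    rw [hez, hx00, hw0, mul_zero, add_zero]
  -- chain-kill lemmas
  have hK3 : ∀ m : ℕ, ∀ x : J, (e*x + e*x = x) →
      (∀ L : List J, L.length = m → (∀ t ∈ L, e*t = 0) → L.foldr (· * ·) x = 0) → x = 0 := by
    intro m
    induction m with
    | zero => intro x _ h; simpa using h [] rfl (by simp)
    | succ m ih =>
        intro x hx h
        apply cond3 x hx
        intro t ht
        have htx : e*(t*x) + e*(t*x) = t*x := by
          rw [mul_comm t x]; exact hhz x t hx ht
        apply ih (t*x) htx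
        intro L hL hLmem
        have := h (L ++ [t]) (by simp [hL]) (by
          intro s hs
          rcases List.mem_append.mp hs with h1 | h2
          · exact hLmem s h1
          · rw [List.mem_singleton.mp h2]; exact ht)
        rwa [List.foldr_append] at this
  have hK2 : ∀ m : ℕ, ∀ x : J, (e*x = 0) →
      (∀ L : List J, L.length = m → (∀ t ∈ L, e*t = 0) → L.foldr (· * ·) x = 0) → x = 0 := by
    intro m
    induction m with
    | zero => intro x _ h; simpa using h [] rfl (by simp)
    | succ m ih =>
        intro x hx h
        apply cond2 x hx
        intro t ht
        have htx : e*(t*x) = 0 := by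
          rw [mul_comm t x]; exact hzz x t hx ht
        apply ih (t*x) htx
        intro L hL hLmem
        have := h (L ++ [t]) (by simp [hL]) (by
          intro s hs
          rcases List.mem_append.mp hs with h1 | h2
          · exact hLmem s h1
          · rw [List.mem_singleton.mp h2]; exact ht)
        rwa [List.foldr_append] at this
  -- φ basics
  have hφ0 : φ 0 = 0 := by
    obtain ⟨z, hz⟩ := hbij.2 0
    have h1 := hmul (z :: List.replicate (k+1) (0:J)) (by simp)
    rw [jrd_rnm_cons _ _ (by simp), jrd_rnm_replicate_zero, mul_zero] at h1
    rw [List.map_cons, List.map_replicate, jrd_rnm_cons _ _ (by simp), hz, zero_mul] at h1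
    exact h1
  have hPA : ∀ z x y : J, φ z = φ x + φ y → ∀ L : List J, L.length = k + 1 →
      φ (L.foldr (· * ·) z) = φ (L.foldr (· * ·) x) + φ (L.foldr (· * ·) y) := by
    intro z x y hz L hL
    have key : ∀ w : J, φ (L.foldr (· * ·) w) = (L.map φ).foldr (· * ·) (φ w) := by
      intro w
      have h1 := hmul (L ++ [w]) (by simp [hL])
      rw [jrd_rnm_append_singleton] at h1
      rw [List.map_append, List.map_singleton, jrd_rnm_append_singleton] at h1
      exact h1
    rw [key z, key x, key y, hz, jrd_foldr_mul_add]
  have hPB : ∀ z x y : J, φ z = φ x + φ y → ∀ G : List J, G.length = k + 1 →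
      φ (z * rnm G) = φ (x * rnm G) + φ (y * rnm G) := by
    intro z x y hz G hG
    have hGne : G ≠ [] := by intro h; rw [h] at hG; simp at hG
    have key : ∀ w : J, φ (w * rnm G) = (φ w) * rnm (G.map φ) := by
      intro w
      have h1 := hmul (w :: G) (by simp [hG])
      rw [jrd_rnm_cons _ _ hGne] at h1
      rw [List.map_cons, jrd_rnm_cons _ _ (by simp [hGne])] at h1
      exact h1
    rw [key z, key x, key y, hz, add_mul]
  have hGe : ∀ z x y : J, φ z = φ x + φ y → φ (z * e) = φ (x * e) + φ (y * e) := by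
    intro z x y hz
    have hG : rnm (List.replicate (k+1) e) = e := by
      rw [List.replicate_succ', jrd_rnm_append_singleton, jrd_foldr_replicate]
      exact jrd_it_fix e e hid k
    have h := hPB z x y hz (List.replicate (k+1) e) (by simp)
    rwa [hG] at h
  have hGu : ∀ u : J, (e*u + e*u = u) → ∀ z x y : J, φ z = φ x + φ y →
      φ (z * u) = φ (x * u) + φ (y * u) := by
    intro u hu z x y hz
    have hG : rnm (List.replicate k jf ++ [u]) = u := by
      rw [jrd_rnm_append_singleton, jrd_foldr_replicate]
      exact jrd_it_fix jf u (hjfH u hu) k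
    have h := hPB z x y hz (List.replicate k jf ++ [u]) (by simp)
    rwa [hG] at h
  -- additivity on (J1, J0) pairs
  have L10 : ∀ x y : J, e*x = x → e*y = 0 → φ (x + y) = φ x + φ y := by
    intro x y hx hy
    obtain ⟨c, hc⟩ := hbij.2 (φ x + φ y)
    suffices hcs : c = x + y by rw [← hcs, hc]
    have s1 := hGe c x y hc
    rw [mul_comm x e, hx, mul_comm y e, hy, hφ0, add_zero] at s1
    have hec : c * e = x := hbij.1 s1
    set d := c - x - y with hd
    have hdZ : e * d = 0 := by
      rw [hd, mul_sub, mul_sub, mul_comm e c, hec, hx, hy]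
      simp
    have s2 : ∀ t : J, e*t = 0 → ∀ T : List J, T.length = k → T.foldr (· * ·) (t * d) = 0 := by
      intro t ht T hT
      have h3 := hPA c x y hc (T ++ [t]) (by simp [hT])
      rw [List.foldr_append, List.foldr_append, List.foldr_append] at h3
      simp only [List.foldr_cons, List.foldr_nil] at h3
      have htx : t * x = 0 := by rw [mul_comm t x]; exact hM1 x t hx ht
      rw [htx, jrd_foldr_mul_zero, hφ0, zero_add] at h3
      have h4 : T.foldr (· * ·) (t * c) = T.foldr (· * ·) (t * y) := hbij.1 h3
      have h5 : t * c = t * y + t * d := by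
        rw [hd, mul_sub, mul_sub, htx]; abel
      rw [h5, jrd_foldr_mul_add] at h4
      exact add_eq_right.mp ((add_comm _ _).trans h4)
    have s3 : ∀ t : J, e*t = 0 → t * d = 0 := by
      intro t ht
      apply hK2 k (t*d) (by rw [mul_comm t d]; exact hzz d t hdZ ht)
      intro L hL _
      exact s2 t ht L hL
    have hd0 : d = 0 := cond2 d hdZ s3
    have : c - (x + y) = 0 := by rw [← sub_sub]; exact hd0
    exact sub_eq_zero.mp this
  -- additivity on (J0, J1/2) pairs
  have L0h : ∀ y w : J, e*y = 0 → (e*w + e*w = w) → φ (y + w) = φ y + φ w := by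
    intro y w hy hw
    obtain ⟨c, hc⟩ := hbij.2 (φ y + φ w)
    suffices hcs : c = y + w by rw [← hcs, hc]
    have s1 := hGe c y w hc
    rw [mul_comm y e, hy, hφ0, zero_add] at s1
    have hec : c * e = w * e := hbij.1 s1
    set d := c - y - w with hd
    have hdZ : e * d = 0 := by
      rw [hd, mul_sub, mul_sub, mul_comm e c, hec, hy, mul_comm w e]
      simp
    have hc' : c = y + w + d := by rw [hd]; abel
    -- kill step
    have s5 : ∀ u : J, (e*u + e*u = u) → d * u = 0 := by
      intro u hu
      have hdu : e*(d*u) + e*(d*u) = d*u := by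
        rw [mul_comm d u]; exact hhz u d hu hdZ
      have s2 := hGu u hu c y w hc
      have s3 := hGe (c*u) (y*u) (w*u) s2
      have s4 : ∀ t : J, e*t = 0 → ∀ S : List J, S.length = k →
          S.foldr (· * ·) (t * ((d*u)*e)) = 0 := by
        intro t ht S hS
        have h3 := hPA ((c*u)*e) ((y*u)*e) ((w*u)*e) s3 (S ++ [t]) (by simp [hS])
        rw [List.foldr_append, List.foldr_append, List.foldr_append] at h3
        simp only [List.foldr_cons, List.foldr_nil] at h3
        have hp1 : e * (e*(w*u)) = e*(w*u) := hB w u hw hu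
        have hwue : t * ((w*u)*e) = 0 := by
          rw [mul_comm (w*u) e, mul_comm t (e*(w*u))]
          exact hM1 _ t hp1 ht
        rw [hwue, jrd_foldr_mul_zero, hφ0, add_zero] at h3
        have h4 : S.foldr (· * ·) (t * ((c*u)*e)) = S.foldr (· * ·) (t * ((y*u)*e)) :=
          hbij.1 h3
        have hsplit : t*((c*u)*e) = t*((y*u)*e) + t*((d*u)*e) := by
          rw [hc']
          simp only [add_mul, mul_add]
          rw [hwue]
          abel
        rw [hsplit, jrd_foldr_mul_add] at h4
        exact add_eq_left.mp h4
      have hkill : ∀ t : J, e*t = 0 → t * ((d*u)*e) = 0 := by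
        intro t ht
        have h1 : e*(e*(d*u)) + e*(e*(d*u)) = e*(d*u) := hhe _ hdu
        have hmem : e*(t * ((d*u)*e)) + e*(t * ((d*u)*e)) = t * ((d*u)*e) := by
          have h2'' := hhz (e*(d*u)) t h1 ht
          rw [mul_comm (e*(d*u)) t] at h2''
          rw [mul_comm (d*u) e]
          exact h2''
        exact hK3 k _ hmem (fun L hL _ => s4 t ht L hL)
      have hdue : (d*u)*e = 0 := by
        apply cond3 _ (by rw [mul_comm (d*u) e]; exact hhe _ hdu) hkill
      rw [mul_comm (d*u) e] at hdue
      rw [← hdu, hdue, add_zero]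
    have hd0 : d = 0 := by
      apply cond1' d hdZ
      intro t ht
      rw [mul_comm t d]; exact s5 t ht
    have : c - (y + w) = 0 := by rw [← sub_sub]; exact hd0
    exact sub_eq_zero.mp this
  -- additivity on (J1, J1/2) pairs
  have L1h : ∀ x w : J, e*x = x → (e*w + e*w = w) → φ (x + w) = φ x + φ w := by
    intro x w hx hw
    obtain ⟨c, hc⟩ := hbij.2 (φ x + φ w)
    suffices hcs : c = x + w by rw [← hcs, hc]
    set d := c - x - w with hd
    have hc' : c = x + w + d := by rw [hd]; abel
    -- S1
    have S1 : ∀ t : J, e*t = 0 → ∀ T : List J, T.length = k → T.foldr (· * ·) (t * d) = 0 := by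
      intro t ht T hT
      have h3 := hPA c x w hc (T ++ [t]) (by simp [hT])
      rw [List.foldr_append, List.foldr_append, List.foldr_append] at h3
      simp only [List.foldr_cons, List.foldr_nil] at h3
      have htx : t * x = 0 := by rw [mul_comm t x]; exact hM1 x t hx ht
      rw [htx, jrd_foldr_mul_zero, hφ0, zero_add] at h3
      have h4 : T.foldr (· * ·) (t * c) = T.foldr (· * ·) (t * w) := hbij.1 h3
      have hsplit : t * c = t * w + t * d := by
        rw [hc']; simp only [mul_add]; rw [htx]; abel
      rw [hsplit, jrd_foldr_mul_add] at h4
      exact add_eq_left.mp h4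
    -- S2 : t*d ∈ P0
    have S2 : ∀ t : J, e*t = 0 → e*(t*d) = 0 := by
      intro t ht
      have h1 := S1 t ht (List.replicate k jf) (by simp)
      rw [jrd_foldr_replicate] at h1
      apply hZLEM (t*d) k
      rw [h1, mul_zero]
    -- S3 : t*d = 0
    have S3 : ∀ t : J, e*t = 0 → t * d = 0 := by
      intro t ht
      exact hK2 k (t*d) (S2 t ht) (fun L hL _ => S1 t ht L hL)
    -- S4 : d ∈ P1
    obtain ⟨d1, dh, d0, hd1, hdh, hd0, hdsum, hedz⟩ := hdec d
    have hdh0 : dh = 0 := by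
      apply cond3 dh hdh
      intro t ht
      have h1 := S3 t ht
      rw [hdsum] at h1
      simp only [mul_add] at h1
      have htd1 : t * d1 = 0 := by rw [mul_comm t d1]; exact hM1 d1 t hd1 ht
      rw [htd1, zero_add] at h1
      have hmemh : e*(t*dh) + e*(t*dh) = t*dh := by
        rw [mul_comm t dh]; exact hhz dh t hdh ht
      have hmem0 : e*(t*d0) = 0 := by
        rw [mul_comm t d0]; exact hzz d0 t hd0 ht
      exact (hdisjh0 _ _ hmemh hmem0 h1).1
    have hd00 : d0 = 0 := by
      apply cond2 d0 hd0
      intro t ht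
      have h1 := S3 t ht
      rw [hdsum, hdh0] at h1
      simp only [mul_add] at h1
      have htd1 : t * d1 = 0 := by rw [mul_comm t d1]; exact hM1 d1 t hd1 ht
      rw [htd1, zero_add, mul_zero, zero_add] at h1
      exact h1
    have hdP1 : e * d = d := by
      rw [hdsum, hdh0, hd00, add_zero, add_zero]; exact hd1
    -- S5 : d * u = 0 for u ∈ H
    have S5 : ∀ u : J, (e*u + e*u = u) → d * u = 0 := by
      intro u hu
      have hduH : e*(d*u) + e*(d*u) = d*u := (hoh d u hdP1 hu).2
      have s2 := hGu u hu c x w hc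
      have s3 := hGe (c*u) (x*u) (w*u) s2
      have s4 : ∀ t : J, e*t = 0 → ∀ S : List J, S.length = k →
          S.foldr (· * ·) (t * ((d*u)*e)) = 0 := by
        intro t ht S hS
        have h3 := hPA ((c*u)*e) ((x*u)*e) ((w*u)*e) s3 (S ++ [t]) (by simp [hS])
        rw [List.foldr_append, List.foldr_append, List.foldr_append] at h3
        simp only [List.foldr_cons, List.foldr_nil] at h3
        have hp1 : e * (e*(w*u)) = e*(w*u) := hB w u hw hu
        have hwue : t * ((w*u)*e) = 0 := by
          rw [mul_comm (w*u) e, mul_comm t (e*(w*u))]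
          exact hM1 _ t hp1 ht
        rw [hwue, jrd_foldr_mul_zero, hφ0, add_zero] at h3
        have h4 : S.foldr (· * ·) (t * ((c*u)*e)) = S.foldr (· * ·) (t * ((x*u)*e)) :=
          hbij.1 h3
        have hsplit : t*((c*u)*e) = t*((x*u)*e) + t*((d*u)*e) := by
          rw [hc']
          simp only [add_mul, mul_add]
          rw [hwue]
          abel
        rw [hsplit, jrd_foldr_mul_add] at h4
        exact add_eq_left.mp h4
      have hkill : ∀ t : J, e*t = 0 → t * ((d*u)*e) = 0 := by
        intro t ht
        have h1 : e*(e*(d*u)) + e*(e*(d*u)) = e*(d*u) := hhe _ hduH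
        have hmem : e*(t * ((d*u)*e)) + e*(t * ((d*u)*e)) = t * ((d*u)*e) := by
          have h2'' := hhz (e*(d*u)) t h1 ht
          rw [mul_comm (e*(d*u)) t] at h2''
          rw [mul_comm (d*u) e]
          exact h2''
        exact hK3 k _ hmem (fun L hL _ => s4 t ht L hL)
      have hdue : (d*u)*e = 0 := by
        apply cond3 _ (by rw [mul_comm (d*u) e]; exact hhe _ hduH) hkill
      rw [mul_comm (d*u) e] at hdue
      rw [← hduH, hdue, add_zero]
    have hd0' : d = 0 := by
      apply cond1 d hdP1
      intro t ht
      rw [mul_comm t d]; exact S5 t ht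
    have : c - (x + w) = 0 := by rw [← sub_sub]; exact hd0'
    exact sub_eq_zero.mp this
  -- additivity on (pure J1 ⊕ J0, J1/2) pairs
  have L10h : ∀ m w : J, (e*(e*m) = e*m) → (e*w + e*w = w) → φ (m + w) = φ m + φ w := by
    intro m w hpure hw
    obtain ⟨c, hc⟩ := hbij.2 (φ m + φ w)
    suffices hcs : c = m + w by rw [← hcs, hc]
    set m1 : J := e*m with hm1
    set m0 : J := m - e*m with hm0
    have hm1P : e*m1 = m1 := hpure
    have hm0P : e*m0 = 0 := by rw [hm0, mul_sub, hpure, sub_self]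
    have hm : m = m1 + m0 := by rw [hm1, hm0]; abel
    set d := c - m - w with hd
    have hc' : c = m + w + d := by rw [hd]; abel
    obtain ⟨d1, dh, d0, hd1, hdh, hd0, hdsum, hedz⟩ := hdec d
    -- E1 : t*d ∈ P0
    have E1 : ∀ t : J, e*t = 0 → e*(t*d) = 0 := by
      intro t ht
      have htwH : e*(t*w) + e*(t*w) = t*w := by
        rw [mul_comm t w]; exact hhz w t hw ht
      have htm : t*m = t*m0 := by
        rw [hm, mul_add]
        have : t * m1 = 0 := by rw [mul_comm t m1]; exact hM1 m1 t hm1P ht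
        rw [this, zero_add]
      have htm0P : e*(t*m0) = 0 := by
        rw [mul_comm t m0]; exact hzz m0 t hm0P ht
      have triple1 := hPA c m w hc (List.replicate k jf ++ [t]) (by simp)
      rw [List.foldr_append, List.foldr_append, List.foldr_append] at triple1
      simp only [List.foldr_cons, List.foldr_nil] at triple1
      rw [jrd_foldr_replicate, jrd_foldr_replicate, jrd_foldr_replicate] at triple1
      rw [htm, jrd_it_fix jf (t*w) (hjfH _ htwH) k] at triple1
      have lvl2 := hGe _ _ _ triple1
      have hz1 : ((jf * ·)^[k] (t*m0)) * e = 0 := by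
        rw [mul_comm]; exact hEFP0 (t*m0) htm0P k
      rw [hz1, hφ0, zero_add] at lvl2
      have h4 : ((jf * ·)^[k] (t*c)) * e = (t*w) * e := hbij.1 lvl2
      have hsplit : (jf * ·)^[k] (t*c)
          = (jf * ·)^[k] (t*m0) + ((t*w) + (jf * ·)^[k] (t*d)) := by
        have : t*c = t*m0 + (t*w + t*d) := by
          rw [hc', mul_add, mul_add, htm]; abel
        rw [this, jrd_it_add, jrd_it_add, jrd_it_fix jf (t*w) (hjfH _ htwH) k]
      rw [hsplit, add_mul, add_mul, hz1, zero_add] at h4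
      have h5 : ((jf * ·)^[k] (t*d)) * e = 0 := add_eq_left.mp h4
      rw [mul_comm] at h5
      exact hZLEM (t*d) k h5
    -- E2 : dh = 0
    have E2 : dh = 0 := by
      have hewH : e*(e*w) + e*(e*w) = e*w := hhe w hw
      have hedhH : e*(e*dh) + e*(e*dh) = e*dh := hhe dh hdh
      have triple1 := hPA c m w hc (List.replicate k jf ++ [e]) (by simp)
      rw [List.foldr_append, List.foldr_append, List.foldr_append] at triple1
      simp only [List.foldr_cons, List.foldr_nil] at triple1
      rw [jrd_foldr_replicate, jrd_foldr_replicate, jrd_foldr_replicate] at triple1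
      rw [jrd_it_fix jf (e*w) (hjfH _ hewH) k] at triple1
      -- triple1 : φ (F k (e*c)) = φ (F k (e*m)) + φ (e*w)
      have hFem : ∀ t : J, e*t = 0 → t * ((jf * ·)^[k] (e*m)) = 0 := by
        intro t ht
        rw [mul_comm]
        exact hM1 _ t (hFP1 (e*m) hpure k).1 ht
      have hFd1 : ∀ t : J, e*t = 0 → t * ((jf * ·)^[k] d1) = 0 := by
        intro t ht
        rw [mul_comm]
        exact hM1 _ t (hFP1 d1 hd1 k).1 ht
      have hkill : ∀ t : J, e*t = 0 → ∀ S : List J, S.length = k →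
          S.foldr (· * ·) (t * (e*dh)) = 0 := by
        intro t ht S hS
        have h3 := hPA _ _ _ triple1 (S ++ [t]) (by simp [hS])
        rw [List.foldr_append, List.foldr_append, List.foldr_append] at h3
        simp only [List.foldr_cons, List.foldr_nil] at h3
        rw [hFem t ht, jrd_foldr_mul_zero, hφ0, zero_add] at h3
        have h4 : S.foldr (· * ·) (t * ((jf * ·)^[k] (e*c)))
            = S.foldr (· * ·) (t * (e*w)) := hbij.1 h3
        have hsplit : t * ((jf * ·)^[k] (e*c)) = t * (e*w) + t * (e*dh) := by
          have h5 : e*c = e*m + (e*w + (d1 + e*dh)) := by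
            rw [hc', mul_add, mul_add, hedz]; abel
          rw [h5, jrd_it_add, jrd_it_add, jrd_it_add,
            jrd_it_fix jf (e*w) (hjfH _ hewH) k,
            jrd_it_fix jf (e*dh) (hjfH _ hedhH) k]
          rw [mul_add, mul_add, mul_add, hFem t ht, hFd1 t ht]
          abel
        rw [hsplit, jrd_foldr_mul_add] at h4
        exact add_eq_left.mp h4
      have hkill2 : ∀ t : J, e*t = 0 → t * (e*dh) = 0 := by
        intro t ht
        have hmem : e*(t*(e*dh)) + e*(t*(e*dh)) = t*(e*dh) := by
          have := hhz (e*dh) t hedhH ht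
          rwa [mul_comm (e*dh) t] at this
        exact hK3 k _ hmem (fun L hL _ => hkill t ht L hL)
      have hedh0 : e*dh = 0 := cond3 (e*dh) hedhH hkill2
      rw [← hdh, hedh0, add_zero]
    -- E3 : d0 = 0
    have E3 : d0 = 0 := by
      have e1 : φ m = φ m1 + φ m0 := by
        rw [hm]; exact L10 m1 m0 hm1P hm0P
      have e2 : φ (m0 + w) = φ m0 + φ w := L0h m0 w hm0P hw
      have hreg : φ c = φ m1 + φ (m0 + w) := by
        rw [hc, e1, e2, add_assoc]
      have hkill : ∀ t : J, e*t = 0 → ∀ S : List J, S.length = k →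
          S.foldr (· * ·) (t * d) = 0 := by
        intro t ht S hS
        have h3 := hPA c m1 (m0 + w) hreg (S ++ [t]) (by simp [hS])
        rw [List.foldr_append, List.foldr_append, List.foldr_append] at h3
        simp only [List.foldr_cons, List.foldr_nil] at h3
        have htm1 : t*m1 = 0 := by rw [mul_comm t m1]; exact hM1 m1 t hm1P ht
        rw [htm1, jrd_foldr_mul_zero, hφ0, zero_add] at h3
        have h4 : S.foldr (· * ·) (t * c) = S.foldr (· * ·) (t * (m0 + w)) := hbij.1 h3
        have hsplit : t * c = t * (m0 + w) + t * d := by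
          have h5 : c = m1 + (m0 + w) + d := by rw [hc', hm]; abel
          rw [h5, mul_add, mul_add, htm1, zero_add]
        rw [hsplit, jrd_foldr_mul_add] at h4
        exact add_eq_left.mp h4
      have htd : ∀ t : J, e*t = 0 → t*d = 0 := by
        intro t ht
        exact hK2 k (t*d) (E1 t ht) (fun L hL _ => hkill t ht L hL)
      apply cond2 d0 hd0
      intro t ht
      have h1 := htd t ht
      rw [hdsum, E2] at h1
      simp only [mul_add] at h1
      have htd1 : t * d1 = 0 := by rw [mul_comm t d1]; exact hM1 d1 t hd1 ht
      rw [htd1, zero_add, mul_zero, zero_add] at h1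
      exact h1
    -- E4 : d1 = 0
    have E4 : d1 = 0 := by
      have e3 : φ (m1 + w) = φ m1 + φ w := L1h m1 w hm1P hw
      have hreg : φ c = φ (m1 + w) + φ m0 := by
        have e1 : φ m = φ m1 + φ m0 := by
          rw [hm]; exact L10 m1 m0 hm1P hm0P
        rw [hc, e1, e3]; abel
      have h3 := hPA c (m1 + w) m0 hreg (List.replicate k jf ++ [e]) (by simp)
      rw [List.foldr_append, List.foldr_append, List.foldr_append] at h3
      simp only [List.foldr_cons, List.foldr_nil] at h3
      rw [jrd_foldr_replicate, jrd_foldr_replicate, jrd_foldr_replicate] at h3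
      rw [hm0P, jrd_it_zero, hφ0, add_zero] at h3
      have h4 : (jf * ·)^[k] (e*c) = (jf * ·)^[k] (e*(m1 + w)) := hbij.1 h3
      have hsplit : (jf * ·)^[k] (e*c)
          = (jf * ·)^[k] (e*(m1+w)) + (jf * ·)^[k] d1 := by
        have h5 : c = (m1 + w) + m0 + d := by rw [hc', hm]; abel
        have h6 : e*c = e*(m1+w) + d1 := by
          rw [h5, mul_add, mul_add, hm0P, add_zero, hedz, E2, mul_zero, add_zero]
        rw [h6, jrd_it_add]
      rw [hsplit] at h4
      have h7 : (jf * ·)^[k] d1 = 0 := add_eq_left.mp h4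
      exact (hFP1 d1 hd1 k).2 h7
    have hd0' : d = 0 := by rw [hdsum, E2, E3, E4, add_zero, add_zero]
    have : c - (m + w) = 0 := by rw [← sub_sub]; exact hd0'
    exact sub_eq_zero.mp this
  -- pure (J1 ⊕ J0) elements are preserved by multiplication with jf
  have hpureF : ∀ z : J, e*(e*z) = e*z → ∀ m : ℕ,
      e*(e*((jf * ·)^[m] z)) = e*((jf * ·)^[m] z) := by
    intro z hz m
    induction m with
    | zero => exact hz
    | succ m ih =>
        rw [Function.iterate_succ_apply', hjf, add_mul]
        have ihe : e*(e*(e*((jf * ·)^[m] z))) = e*(e*((jf * ·)^[m] z)) :=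
          congrArg (fun y => e * y) ih
        simp only [mul_add]
        rw [ihe, ih]
  -- MASTER computation
  intro a ha b hb a₀ ha₀
  have ha' : e*a + e*a = a := ha
  have hb' : e*b + e*b = b := hb
  have ha₀' : e*a₀ = 0 := ha₀
  have hqH : e*(a*a₀) + e*(a*a₀) = a*a₀ := hhz a a₀ ha' ha₀'
  have hqbH : e*(a*a₀+b) + e*(a*a₀+b) = a*a₀ + b := by
    simp only [mul_add]
    calc e*(a*a₀) + e*b + (e*(a*a₀) + e*b) = (e*(a*a₀) + e*(a*a₀)) + (e*b + e*b) := by abel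
      _ = a*a₀ + b := by rw [hqH, hb']
  have pureβ : e*(e*((jf * ·)^[k] (a*b))) = e*((jf * ·)^[k] (a*b)) :=
    hpureF (a*b) (hB a b ha' hb') k
  have hjfP1' : e * jf = jf := by rw [hjf, mul_add, hid]
  have hsplit1 : φ (jf + a) = φ jf + φ a := L1h jf a hjfP1' ha'
  have hsplit2 : φ (a₀ + b) = φ a₀ + φ b := L0h a₀ b ha₀' hb'
  have hterm : ∀ x y : J, (φ jf * ·)^[k] (φ x * φ y) = φ ((jf * ·)^[k] (x * y)) := by
    intro x y
    have h1 := hmul (List.replicate k jf ++ [x, y]) (by simp)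
    rw [jrd_rnm_replicate_append_two, List.map_append, List.map_replicate] at h1
    simp only [List.map_cons, List.map_nil] at h1
    rw [jrd_rnm_replicate_append_two] at h1
    exact h1.symm
  have hstep := hmul (List.replicate k jf ++ [jf + a, a₀ + b]) (by simp)
  rw [jrd_rnm_replicate_append_two, List.map_append, List.map_replicate] at hstep
  simp only [List.map_cons, List.map_nil] at hstep
  rw [jrd_rnm_replicate_append_two] at hstep
  rw [hsplit1, hsplit2,
      add_mul (φ jf) (φ a) (φ a₀ + φ b),
      mul_add (φ jf) (φ a₀) (φ b),
      mul_add (φ a) (φ a₀) (φ b)] at hstep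
  rw [jrd_it_add (φ jf) k (φ jf * φ a₀ + φ jf * φ b) (φ a * φ a₀ + φ a * φ b),
      jrd_it_add (φ jf) k (φ jf * φ a₀) (φ jf * φ b),
      jrd_it_add (φ jf) k (φ a * φ a₀) (φ a * φ b)] at hstep
  rw [hterm jf a₀, hterm jf b, hterm a a₀, hterm a b] at hstep
  rw [add_mul (jf) (a) (a₀ + b), mul_add (jf) (a₀) (b), mul_add (a) (a₀) (b)] at hstep
  rw [jrd_it_add (jf) k (jf * a₀ + jf * b) (a * a₀ + a * b),
      jrd_it_add (jf) k (jf * a₀) (jf * b),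
      jrd_it_add (jf) k (a * a₀) (a * b)] at hstep
  rw [hjfP0 a₀ ha₀', jrd_it_zero, hφ0] at hstep
  rw [hjfH b hb', jrd_it_fix jf b (hjfH b hb') k] at hstep
  rw [jrd_it_fix jf (a*a₀) (hjfH _ hqH) k] at hstep
  rw [show (0:J) + b + (a*a₀ + (jf * ·)^[k] (a*b))
        = (jf * ·)^[k] (a*b) + (a*a₀ + b) from by abel] at hstep
  rw [L10h ((jf * ·)^[k] (a*b)) (a*a₀ + b) pureβ hqbH] at hstep
  have h9 : φ ((jf * ·)^[k] (a*b)) + φ (a*a₀ + b)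
      = φ ((jf * ·)^[k] (a*b)) + (φ (a*a₀) + φ b) := by
    rw [hstep]; abel
  exact add_left_cancel h9
end
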